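/- Let q be a prime power, 1 ≤ k < n, and let S ⊆ G_q(k,n) be a sunflower with center of dimension c, 0 ≤ c ≤ k−1. Let r be the remainder of the division of n−c by k−c. If |S| ≥ (q^{n−c} − q^r)/(q^{k−c} − 1) − q^r + 1, then span(S) = F_q^n. -/

import Mathlib

open Submodule Module Set

/-- The orthogonal complement of a subspace of `Fin n → F` with respect to the
standard bilinear form `(x, y) ↦ ∑ i, x i * y i`. -/
def stdOrth {F : Type} [Field F] {n : ℕ} (U : Submodule F (Fin n → F)) :
    Submodule F (Fin n → F) where
  carrier := {x | ∀ y ∈ U, ∑ i, x i * y i = 0}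
  add_mem' := by
    intro a b ha hb y hy
    simp only [Set.mem_setOf_eq] at *
    simp [add_mul, Finset.sum_add_distrib, ha y hy, hb y hy]
  zero_mem' := by intro y hy; simp
  smul_mem' := by
    intro c a ha y hy
    simp only [Set.mem_setOf_eq] at *
    simp [smul_eq_mul, mul_assoc, ← Finset.mul_sum, ha y hy]

/-- An equidistant `c`-intersecting subspace code of constant dimension `k` in `F^n`:
a set of at least two `k`-dimensional subspaces, any two distinct members of which
intersect in dimension `c`. -/
def IsEquidistantCode (F : Type) [Field F] (n k c : ℕ)
    (C : Set (Submodule F (Fin n → F))) : Prop :=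
  2 ≤ C.ncard ∧ (∀ U ∈ C, Module.finrank F U = k) ∧
    ∀ U ∈ C, ∀ V ∈ C, U ≠ V → Module.finrank F ↥(U ⊓ V) = c

/-- A set of subspaces is a sunflower if there is a common center `Z` equal to the
intersection of any two distinct members. -/
def IsSunflower {F : Type} [Field F] {n : ℕ} (C : Set (Submodule F (Fin n → F))) : Prop :=
  ∃ Z : Submodule F (Fin n → F), ∀ U ∈ C, ∀ V ∈ C, U ≠ V → U ⊓ V = Z

/-- `eMax F n k c` is the maximum cardinality of an equidistant `c`-intersecting
code of constant dimension `k` in `F^n`. -/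
noncomputable def eMax (F : Type) [Field F] (n k c : ℕ) : ℕ :=
  sSup {m | ∃ C : Set (Submodule F (Fin n → F)), IsEquidistantCode F n k c C ∧ C.ncard = m}

private lemma geom_nat (x a : ℕ) (hx : 1 ≤ x) :
    (x - 1) * ∑ i ∈ Finset.range a, x ^ i = x ^ a - 1 := by
  induction a with
  | zero => simp
  | succ a ih =>
    rw [Finset.sum_range_succ, Nat.mul_add, ih, Nat.sub_mul, one_mul,
      mul_comm x (x ^ a), ← pow_succ]
    have h1 : 1 ≤ x ^ a := Nat.one_le_pow _ _ hx
    have h2 : x ^ a ≤ x ^ (a + 1) := Nat.pow_le_pow_right hx (by omega)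
    omega

private lemma arith_main {q d N r s : ℕ} (hq : 2 ≤ q) (hd : 1 ≤ d) (hN : 2 * d + 1 ≤ N)
    (hr : r = N % d)
    (hB : (q ^ N - q ^ r) / (q ^ d - 1) - q ^ r + 1 ≤ s) :
    q ^ (N - 1) - 1 < s * (q ^ d - 1) := by
  set a := N / d with hadef
  have hd0 : 0 < d := hd
  have hrd : r < d := by rw [hr]; exact Nat.mod_lt _ hd0
  have hra : r + d * a = N := by rw [hr, hadef, Nat.mod_add_div]
  have ha2 : 2 ≤ a := by
    rcases Nat.lt_or_ge a 2 with h | h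
    · interval_cases a <;> omega
    · exact h
  have hq1 : 1 ≤ q ^ d := Nat.one_le_pow _ _ (by omega)
  have hqd2 : 2 ≤ q ^ d := by
    calc 2 ≤ q := hq
    _ = q ^ 1 := (pow_one q).symm
    _ ≤ q ^ d := Nat.pow_le_pow_right (by omega) hd
  have hgeom : (q ^ d - 1) * ∑ i ∈ Finset.range a, (q ^ d) ^ i = (q ^ d) ^ a - 1 :=
    geom_nat _ _ hq1
  set T := q ^ r * ∑ i ∈ Finset.range a, (q ^ d) ^ i with hT
  have hsum1 : 1 ≤ ∑ i ∈ Finset.range a, (q ^ d) ^ i := by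
    calc 1 = ∑ i ∈ Finset.range 1, (q ^ d) ^ i := by simp
    _ ≤ _ := Finset.sum_le_sum_of_subset (Finset.range_subset_range.2 (le_trans (by norm_num) ha2))
  have hqr1 : 1 ≤ q ^ r := Nat.one_le_pow _ _ (by omega)
  have hTr : q ^ r ≤ T := by
    calc q ^ r = q ^ r * 1 := (mul_one _).symm
    _ ≤ T := Nat.mul_le_mul_left _ hsum1
  have hda : (q ^ d) ^ a = q ^ (d * a) := (pow_mul q d a).symm
  have hrda : q ^ r * q ^ (d * a) = q ^ N := by rw [← pow_add, hra]
  have hmul2 : (q ^ d - 1) * T = q ^ N - q ^ r := by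
    rw [hT, mul_left_comm, hgeom, hda, Nat.mul_sub, mul_one, hrda]
  have hdiv : (q ^ N - q ^ r) / (q ^ d - 1) = T := by
    rw [← hmul2]
    exact Nat.mul_div_cancel_left _ (by omega)
  rw [hdiv] at hB
  set X := T - q ^ r with hX
  have hTX : T = X + q ^ r := by omega
  have e2 : (q ^ d - 1) * T = (q ^ d - 1) * X + (q ^ d - 1) * q ^ r := by
    rw [hTX, Nat.mul_add]
  have e3' : (q ^ d - 1) * q ^ r = q ^ (r + d) - q ^ r := by
    rw [Nat.sub_mul, one_mul, ← pow_add, Nat.add_comm d r]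
  have hrdN : q ^ (r + d) ≤ q ^ N := Nat.pow_le_pow_right (by omega) (by omega)
  have hrr : q ^ r ≤ q ^ (r + d) := Nat.pow_le_pow_right (by omega) (by omega)
  have hkey : (q ^ d - 1) * X + q ^ (r + d) = q ^ N := by
    revert hmul2 e2 e3'
    generalize (q ^ d - 1) * T = PT
    generalize (q ^ d - 1) * X = PX
    generalize (q ^ d - 1) * q ^ r = PR
    intro h1 h2 h3
    omega
  have hb1 : q ^ (r + d) ≤ q ^ (N - 1) := Nat.pow_le_pow_right (by omega) (by omega)
  have hb2 : 2 * q ^ (N - 1) ≤ q ^ N := by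
    calc 2 * q ^ (N - 1) ≤ q ^ (N - 1) * q := by
          rw [Nat.mul_comm]; exact Nat.mul_le_mul_left _ hq
    _ = q ^ N := by rw [← pow_succ]; congr 1; omega
  have hs : X + 1 ≤ s := hB
  have hfin : (X + 1) * (q ^ d - 1) ≤ s * (q ^ d - 1) := Nat.mul_le_mul_right _ hs
  have main : q ^ (N - 1) - 1 < (X + 1) * (q ^ d - 1) := by
    have hexp : (X + 1) * (q ^ d - 1) = (q ^ d - 1) * X + (q ^ d - 1) := by ring
    rw [hexp]
    revert hkey
    generalize (q ^ d - 1) * X = P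
    intro hkey
    omega
  exact lt_of_lt_of_le main hfin


/-- A sunflower in `G_q(k,n)` with center of dimension `c` whose cardinality is at
least `(q^{n-c} - q^r)/(q^{k-c} - 1) - q^r + 1`, where `r = (n-c) mod (k-c)`,
spans `F_q^n`. -/
theorem large_sunflower_spans
    (q : ℕ) (hq : IsPrimePow q) (F : Type) [Field F] [Fintype F]
    (hF : Fintype.card F = q) (k n c r : ℕ) (hk : 1 ≤ k) (hkn : k < n) (hc : c ≤ k - 1)
    (S : Set (Submodule F (Fin n → F))) (Z : Submodule F (Fin n → F))
    (hcard2 : 2 ≤ S.ncard) (hdim : ∀ U ∈ S, Module.finrank F U = k)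
    (hZ : ∀ U ∈ S, ∀ V ∈ S, U ≠ V → U ⊓ V = Z) (hZdim : Module.finrank F Z = c)
    (hr : r = (n - c) % (k - c))
    (hcard : (q ^ (n - c) - q ^ r) / (q ^ (k - c) - 1) - q ^ r + 1 ≤ S.ncard) :
    sSup S = ⊤ := by
  classical
  by_contra hne
  have hq2 : 2 ≤ q := hq.two_le
  have hck : c < k := by omega
  have hSfin : S.Finite := by
    by_contra h
    rw [Set.Infinite.ncard h] at hcard2; omega
  have hfr : Module.finrank F (Fin n → F) = n := Module.finrank_fin_fun F
  set W := sSup S with hW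
  have hWlt : Module.finrank F W < n := by
    have := Submodule.finrank_lt (K := F) (V := Fin n → F) hne
    rwa [hfr] at this
  set m := Module.finrank F W with hm
  have hle : ∀ U ∈ S, U ≤ W := fun U hU => le_sSup hU
  have hZle : ∀ U ∈ S, Z ≤ U := by
    intro U hU
    obtain ⟨V, hV, hVU⟩ := Set.exists_ne_of_one_lt_ncard (s := S) (by omega) U
    rw [← hZ V hV U hU hVU]
    exact inf_le_right
  obtain ⟨U₀, hU₀, V₀, hV₀, hUV₀⟩ : ∃ U ∈ S, ∃ V ∈ S, U ≠ V :=
    (Set.one_lt_ncard hSfin).1 (by omega)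
  -- dimension bound: 2k - c ≤ m
  have hsup : Module.finrank F ↥(U₀ ⊔ V₀) + Module.finrank F ↥(U₀ ⊓ V₀)
      = Module.finrank F U₀ + Module.finrank F V₀ :=
    Submodule.finrank_sup_add_finrank_inf_eq _ _
  rw [hZ U₀ hU₀ V₀ hV₀ hUV₀, hZdim, hdim U₀ hU₀, hdim V₀ hV₀] at hsup
  have hsuple : Module.finrank F ↥(U₀ ⊔ V₀) ≤ m :=
    Submodule.finrank_mono (sup_le (hle _ hU₀) (hle _ hV₀))
  have hN : 2 * (k - c) + 1 ≤ n - c := by omega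
  -- cardinality of subspaces
  have hcardsub : ∀ P : Submodule F (Fin n → F), Nat.card ↥P = q ^ Module.finrank F P := by
    intro P
    haveI : Fintype ↥P := Fintype.ofFinite _
    rw [Nat.card_eq_fintype_card, card_eq_pow_finrank (K := F), hF]
  have hncard : ∀ P : Submodule F (Fin n → F),
      (P : Set (Fin n → F)).ncard = q ^ Module.finrank F P := by
    intro P
    have h1 := Nat.card_coe_set_eq (P : Set (Fin n → F))
    rw [SetLike.coe_sort_coe] at h1
    rw [← h1, hcardsub]
  have hdiff : ∀ U ∈ S, ((U : Set (Fin n → F)) \ Z).ncard = q ^ k - q ^ c := by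
    intro U hU
    rw [Set.ncard_diff (SetLike.coe_subset_coe.mpr (hZle U hU)), hncard, hncard,
      hdim U hU, hZdim]
  -- counting
  set t : Finset (Submodule F (Fin n → F)) := hSfin.toFinset with ht
  set f : Submodule F (Fin n → F) → Finset (Fin n → F) :=
    fun U => (Set.toFinite ((U : Set (Fin n → F)) \ Z)).toFinset with hf
  have hdisj : ∀ U ∈ t, ∀ V ∈ t, U ≠ V → Disjoint (f U) (f V) := by
    intro U hU V hV hUV
    rw [ht, Set.Finite.mem_toFinset] at hU hV
    rw [Finset.disjoint_left]
    intro x hxU hxV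
    simp only [hf, Set.Finite.mem_toFinset, Set.mem_diff, SetLike.mem_coe] at hxU hxV
    exact hxU.2 (by rw [← hZ U hU V hV hUV]; exact Submodule.mem_inf.mpr ⟨hxU.1, hxV.1⟩)
  have hsubW : t.biUnion f ⊆ (Set.toFinite ((W : Set (Fin n → F)) \ Z)).toFinset := by
    intro x hx
    rw [Finset.mem_biUnion] at hx
    obtain ⟨U, hUt, hxU⟩ := hx
    rw [ht, Set.Finite.mem_toFinset] at hUt
    simp only [hf, Set.Finite.mem_toFinset, Set.mem_diff, SetLike.mem_coe] at hxU ⊢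
    exact ⟨hle U hUt hxU.1, hxU.2⟩
  have hWZ : ((W : Set (Fin n → F)) \ Z).ncard = q ^ m - q ^ c := by
    rw [Set.ncard_diff (SetLike.coe_subset_coe.mpr
      (le_trans (hZle U₀ hU₀) (hle U₀ hU₀))), hncard, hncard, hZdim]
  have hcount1 : S.ncard * (q ^ k - q ^ c) ≤ q ^ m - q ^ c := by
    calc S.ncard * (q ^ k - q ^ c) = ∑ _U ∈ t, (q ^ k - q ^ c) := by
          rw [Finset.sum_const, smul_eq_mul, ht, ← Set.ncard_eq_toFinset_card]
    _ = ∑ U ∈ t, (f U).card := by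
          refine Finset.sum_congr rfl (fun U hU => ?_)
          rw [ht, Set.Finite.mem_toFinset] at hU
          rw [hf, ← Set.ncard_eq_toFinset_card, hdiff U hU]
    _ = (t.biUnion f).card := (Finset.card_biUnion hdisj).symm
    _ ≤ (Set.toFinite ((W : Set (Fin n → F)) \ Z)).toFinset.card :=
          Finset.card_le_card hsubW
    _ = q ^ m - q ^ c := by rw [← Set.ncard_eq_toFinset_card, hWZ]
  -- reduce
  have hsplit : q ^ k - q ^ c = q ^ c * (q ^ (k - c) - 1) := by
    have hkc : c + (k - c) = k := by omega
    rw [Nat.mul_sub, mul_one, ← pow_add, hkc]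
  have hmN : q ^ m - q ^ c ≤ q ^ c * (q ^ (n - c - 1) - 1) := by
    have h1 : q ^ m ≤ q ^ (n - 1) := Nat.pow_le_pow_right (by omega) (by omega)
    have h2 : q ^ c * q ^ (n - c - 1) = q ^ (n - 1) := by
      rw [← pow_add]; congr 1; omega
    have h3 : 1 ≤ q ^ c := Nat.one_le_pow _ _ (by omega)
    rw [Nat.mul_sub, mul_one, h2]
    omega
  have hfinal : S.ncard * (q ^ (k - c) - 1) ≤ q ^ (n - c - 1) - 1 := by
    have h' : q ^ c * (S.ncard * (q ^ (k - c) - 1)) ≤ q ^ c * (q ^ (n - c - 1) - 1) := by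
      calc q ^ c * (S.ncard * (q ^ (k - c) - 1))
          = S.ncard * (q ^ c * (q ^ (k - c) - 1)) := by ring
      _ = S.ncard * (q ^ k - q ^ c) := by rw [← hsplit]
      _ ≤ q ^ m - q ^ c := hcount1
      _ ≤ _ := hmN
    exact Nat.le_of_mul_le_mul_left h' (Nat.pow_pos (by omega))
  have harith := arith_main (s := S.ncard) hq2 (by omega : 1 ≤ k - c) hN hr hcard
  omega
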